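/- Let n ∈ ℕ and let z₁, z₂ ∈ ℂ satisfy |z₁|² + |z₂|² = 1. Define the vector ψ ∈ ℂ^{n+1} by ψ_k = √C(n,k) · z₁^{n−k} · z₂^{k} for k ∈ {0,…,n}, and the real numbers n_x = 2·Re(conj(z₁)·z₂), n_y = 2·Im(conj(z₁)·z₂), n_z = |z₁|² − |z₂|². Then (n_x, n_y, n_z) is a unit vector, and ψ is an eigenvector of the matrix n_x·J_x + n_y·J_y + n_z·J_z with eigenvalue n/2: (n_x J_x + n_y J_y + n_z J_z)·ψ = (n/2)·ψ. That is, the explicitly parameterized vector ψ is the spin coherent state along (n_x, n_y, n_z), i.e., the eigenstate of maximal eigenvalue n/2 of the spin component along that direction. -/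

import Mathlib

open Matrix Finset

lemma sq1 (n k : ℕ) (hk : k < n) :
    Real.sqrt ((k + 1 : ℝ) * ((n : ℝ) - k)) * Real.sqrt (n.choose (k + 1) : ℝ)
      = ((n : ℝ) - k) * Real.sqrt (n.choose k : ℝ) := by
  have hnk : (0 : ℝ) ≤ (n : ℝ) - k := by
    have := hk.le
    have : (k : ℝ) ≤ n := by exact_mod_cast this
    linarith
  have natid : (k + 1) * (n - k) * n.choose (k + 1) = (n - k) ^ 2 * n.choose k := by
    have hc := Nat.choose_succ_right_eq n k
    calc (k + 1) * (n - k) * n.choose (k + 1)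
        = (n - k) * (n.choose (k + 1) * (k + 1)) := by ring
      _ = (n - k) * (n.choose k * (n - k)) := by rw [hc]
      _ = (n - k) ^ 2 * n.choose k := by ring
  have key : ((k + 1 : ℝ) * ((n : ℝ) - k)) * (n.choose (k + 1) : ℝ)
      = ((n : ℝ) - k) ^ 2 * (n.choose k : ℝ) := by
    have h0 : (n : ℝ) - k = ((n - k : ℕ) : ℝ) := by
      rw [Nat.cast_sub hk.le]
    rw [h0]
    exact_mod_cast natid
  rw [← Real.sqrt_mul (mul_nonneg (by positivity) hnk), key,
    Real.sqrt_mul (sq_nonneg _), Real.sqrt_sq hnk]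

lemma sq2 (n j : ℕ) (hj : j < n) :
    Real.sqrt ((j + 1 : ℝ) * ((n : ℝ) - j)) * Real.sqrt (n.choose j : ℝ)
      = (j + 1 : ℝ) * Real.sqrt (n.choose (j + 1) : ℝ) := by
  have natid : (j + 1) * (n - j) * n.choose j = (j + 1) ^ 2 * n.choose (j + 1) := by
    have hc := Nat.choose_succ_right_eq n j
    calc (j + 1) * (n - j) * n.choose j
        = (j + 1) * (n.choose j * (n - j)) := by ring
      _ = (j + 1) * (n.choose (j + 1) * (j + 1)) := by rw [hc]
      _ = (j + 1) ^ 2 * n.choose (j + 1) := by ring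
  have hnj : (0 : ℝ) ≤ (n : ℝ) - j := by
    have : (j : ℝ) ≤ n := by exact_mod_cast hj.le
    linarith
  have key : ((j + 1 : ℝ) * ((n : ℝ) - j)) * (n.choose j : ℝ)
      = ((j : ℝ) + 1) ^ 2 * (n.choose (j + 1) : ℝ) := by
    have h0 : (n : ℝ) - j = ((n - j : ℕ) : ℝ) := by rw [Nat.cast_sub hj.le]
    rw [h0]
    exact_mod_cast natid
  rw [← Real.sqrt_mul (mul_nonneg (by positivity) hnj), key,
    Real.sqrt_mul (sq_nonneg _), Real.sqrt_sq (by positivity)]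


/-- The spin matrix `J_x` for spin `j = n/2` (rows/columns indexed by `k = j − m ∈ {0,…,n}`):
`(J_x)_{k,k+1} = (J_x)_{k+1,k} = (1/2)√((k+1)(n−k))`, all other entries zero. -/
noncomputable def Jx (n : ℕ) : Matrix (Fin (n + 1)) (Fin (n + 1)) ℂ :=
  Matrix.of fun k' k =>
    if (k : ℕ) = (k' : ℕ) + 1 then
      ((1 / 2 : ℝ) * Real.sqrt (((k' : ℕ) + 1 : ℝ) * ((n : ℝ) - (k' : ℕ))) : ℂ)
    else if (k' : ℕ) = (k : ℕ) + 1 then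
      ((1 / 2 : ℝ) * Real.sqrt (((k : ℕ) + 1 : ℝ) * ((n : ℝ) - (k : ℕ))) : ℂ)
    else 0

/-- The spin matrix `J_y` for spin `j = n/2`:
`(J_y)_{k,k+1} = −(i/2)√((k+1)(n−k))`, `(J_y)_{k+1,k} = (i/2)√((k+1)(n−k))`,
all other entries zero. -/
noncomputable def Jy (n : ℕ) : Matrix (Fin (n + 1)) (Fin (n + 1)) ℂ :=
  Matrix.of fun k' k =>
    if (k : ℕ) = (k' : ℕ) + 1 then
      -(Complex.I / 2) * (Real.sqrt (((k' : ℕ) + 1 : ℝ) * ((n : ℝ) - (k' : ℕ))) : ℂ)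
    else if (k' : ℕ) = (k : ℕ) + 1 then
      (Complex.I / 2) * (Real.sqrt (((k : ℕ) + 1 : ℝ) * ((n : ℝ) - (k : ℕ))) : ℂ)
    else 0

/-- The spin matrix `J_z` for spin `j = n/2`: diagonal with entries `n/2 − k`. -/
noncomputable def Jz (n : ℕ) : Matrix (Fin (n + 1)) (Fin (n + 1)) ℂ :=
  Matrix.diagonal fun k => ((n : ℂ) / 2 - (k : ℕ))

/-- With `|z₁|² + |z₂|² = 1`, the vector `ψ_k = √C(n,k)·z₁^{n−k}·z₂^k` is the
spin coherent state along the unit vector `(n_x, n_y, n_z)` with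
`n_x = 2 Re(conj(z₁)z₂)`, `n_y = 2 Im(conj(z₁)z₂)`, `n_z = |z₁|² − |z₂|²`: it is an
eigenvector of `n_x J_x + n_y J_y + n_z J_z` with the maximal eigenvalue `n/2`. -/
theorem coherent_state_eigenvector (n : ℕ) (z₁ z₂ : ℂ)
    (h : ‖z₁‖ ^ 2 + ‖z₂‖ ^ 2 = 1)
    (ψ : Fin (n + 1) → ℂ)
    (hψ : ∀ k : Fin (n + 1),
      ψ k = (Real.sqrt (n.choose (k : ℕ) : ℝ) : ℂ) * z₁ ^ (n - (k : ℕ)) * z₂ ^ (k : ℕ))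
    (nx ny nz : ℝ)
    (hx : nx = 2 * (starRingEnd ℂ z₁ * z₂).re)
    (hy : ny = 2 * (starRingEnd ℂ z₁ * z₂).im)
    (hz : nz = ‖z₁‖ ^ 2 - ‖z₂‖ ^ 2) :
    nx ^ 2 + ny ^ 2 + nz ^ 2 = 1 ∧
      ((nx : ℂ) • Jx n + (ny : ℂ) • Jy n + (nz : ℂ) • Jz n).mulVec ψ =
        ((n : ℂ) / 2) • ψ := by
  constructor
  · have h1 := Complex.sq_norm ((starRingEnd ℂ) z₁ * z₂)
    rw [Complex.normSq_apply, norm_mul, Complex.norm_conj, mul_pow] at h1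
    subst hx hy hz
    nlinarith [h, h1]
  · have hcm : ((nx : ℂ) - Complex.I * ny) = 2 * (z₁ * (starRingEnd ℂ) z₂) := by
      rw [hx, hy]
      apply Complex.ext <;> simp [Complex.mul_re, Complex.mul_im] <;> ring
    have hcp : ((nx : ℂ) + Complex.I * ny) = 2 * ((starRingEnd ℂ) z₁ * z₂) := by
      rw [hx, hy]
      apply Complex.ext <;> simp [Complex.mul_re, Complex.mul_im] <;> ring
    set Ψ : ℕ → ℂ := fun m =>
      (Real.sqrt (n.choose m : ℝ) : ℂ) * z₁ ^ (n - m) * z₂ ^ m with hΨdef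
    have hΨ : ∀ k : Fin (n + 1), ψ k = Ψ (k : ℕ) := fun k => hψ k
    funext k'
    simp only [Matrix.mulVec, dotProduct, Matrix.add_apply, Matrix.smul_apply,
      smul_eq_mul, Pi.smul_apply]
    set c1 : ℂ := z₁ * (starRingEnd ℂ) z₂ *
      ((Real.sqrt (((k' : ℕ) + 1 : ℝ) * ((n : ℝ) - (k' : ℕ))) : ℝ) : ℂ) * Ψ ((k' : ℕ) + 1) with hc1
    set c2 : ℂ := (starRingEnd ℂ) z₁ * z₂ *
      ((Real.sqrt ((((k' : ℕ) - 1 : ℕ) + 1 : ℝ) * ((n : ℝ) - ((k' : ℕ) - 1 : ℕ))) : ℝ) : ℂ) *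
      Ψ ((k' : ℕ) - 1) with hc2
    set c3 : ℂ := (nz : ℂ) * ((n : ℂ) / 2 - ((k' : ℕ) : ℂ)) * Ψ (k' : ℕ) with hc3
    have key : ∀ k : Fin (n + 1),
        ((nx : ℂ) * Jx n k' k + (ny : ℂ) * Jy n k' k + (nz : ℂ) * Jz n k' k) * ψ k
          = (if (k : ℕ) = (k' : ℕ) + 1 then c1 else 0)
            + (if (k : ℕ) + 1 = (k' : ℕ) then c2 else 0)
            + (if k' = k then c3 else 0) := by
      intro k
      simp only [Jx, Jy, Jz, Matrix.of_apply, Matrix.diagonal_apply]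
      by_cases h1 : (k : ℕ) = (k' : ℕ) + 1
      · have h2' : ¬ ((k : ℕ) + 1 = (k' : ℕ)) := by omega
        have h3 : ¬ (k' = k) := by intro e; rw [e] at h1; omega
        rw [if_pos h1, if_pos h1, if_neg h3, if_pos h1, if_neg h2', if_neg h3]
        rw [hΨ k, h1, hc1]
        push_cast
        linear_combination ((Real.sqrt (((k' : ℕ) + 1 : ℝ) * ((n : ℝ) - (k' : ℕ))) : ℝ) : ℂ)
          * Ψ ((k' : ℕ) + 1) / 2 * hcm
      · by_cases h2 : (k' : ℕ) = (k : ℕ) + 1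
        · have h2' : (k : ℕ) + 1 = (k' : ℕ) := h2.symm
          have h3 : ¬ (k' = k) := by intro e; rw [e] at h2; omega
          have hk1 : (k' : ℕ) - 1 = (k : ℕ) := by omega
          rw [if_neg h1, if_pos h2, if_neg h1, if_pos h2, if_neg h3, if_neg h1,
            if_pos h2', if_neg h3]
          rw [hΨ k, hc2, hk1]
          push_cast
          linear_combination ((Real.sqrt (((k : ℕ) + 1 : ℝ) * ((n : ℝ) - (k : ℕ))) : ℝ) : ℂ)
            * Ψ (k : ℕ) / 2 * hcp
        · by_cases h3 : k' = k
          · have h1' : ¬ ((k : ℕ) + 1 = (k' : ℕ)) := by omega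
            rw [if_neg h1, if_neg h2, if_neg h1, if_neg h2, if_pos h3, if_neg h1,
              if_neg h1', if_pos h3]
            rw [hΨ k, hc3, h3]
            ring
          · have h1' : ¬ ((k : ℕ) + 1 = (k' : ℕ)) := by
              intro e; exact h3 (Fin.ext (by omega))
            rw [if_neg h1, if_neg h2, if_neg h1, if_neg h2, if_neg h3, if_neg h1,
              if_neg h1', if_neg h3]
            ring
    rw [Finset.sum_congr rfl (fun k _ => key k), Finset.sum_add_distrib,
      Finset.sum_add_distrib]
    have hs3 : (∑ k : Fin (n + 1), if k' = k then c3 else 0) = c3 := by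
      simp
    have hs1 : (∑ k : Fin (n + 1), if (k : ℕ) = (k' : ℕ) + 1 then c1 else 0) = c1 := by
      by_cases hk : (k' : ℕ) < n
      · have hiff : ∀ k : Fin (n + 1), ((k : ℕ) = (k' : ℕ) + 1) ↔ (k = ⟨(k' : ℕ) + 1, by omega⟩) := by
          intro k; rw [Fin.ext_iff]
        simp_rw [hiff]
        simp
      · have hkn : (k' : ℕ) = n := by have := k'.isLt; omega
        have hz1 : c1 = 0 := by
          rw [hc1]
          have h0 : ((n : ℝ) - (k' : ℕ)) = 0 := by rw [hkn]; ring
          rw [h0, mul_zero, Real.sqrt_zero]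
          push_cast
          ring
        rw [hz1]
        apply Finset.sum_eq_zero
        intro k _
        have := k.isLt
        exact if_neg (by omega)
    have hs2 : (∑ k : Fin (n + 1), if (k : ℕ) + 1 = (k' : ℕ) then c2 else 0)
        = if 0 < (k' : ℕ) then c2 else 0 := by
      by_cases hk0 : 0 < (k' : ℕ)
      · have hiff : ∀ k : Fin (n + 1), ((k : ℕ) + 1 = (k' : ℕ)) ↔ (k = ⟨(k' : ℕ) - 1, by omega⟩) := by
          intro k; rw [Fin.ext_iff]; simp; omega
        simp_rw [hiff]
        simp [hk0]
      · rw [if_neg hk0]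
        apply Finset.sum_eq_zero
        intro k _
        exact if_neg (by omega)
    rw [hs1, hs2, hs3]
    have claimA : c1 = ((‖z₂‖ ^ 2 : ℝ) : ℂ) * ((((n : ℝ) - (k' : ℕ) : ℝ)) : ℂ) * Ψ (k' : ℕ) := by
      by_cases hk : (k' : ℕ) < n
      · have e1 : z₁ ^ (n - (k' : ℕ)) = z₁ ^ (n - ((k' : ℕ) + 1)) * z₁ := by
          rw [← pow_succ]; congr 1; omega
        have e3 : (starRingEnd ℂ) z₂ * z₂ = ((‖z₂‖ ^ 2 : ℝ) : ℂ) := by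
          rw [mul_comm, Complex.mul_conj, Complex.sq_norm]
        have e2c : ((Real.sqrt (((k' : ℕ) + 1 : ℝ) * ((n : ℝ) - (k' : ℕ))) : ℝ) : ℂ)
              * ((Real.sqrt (n.choose ((k' : ℕ) + 1) : ℝ) : ℝ) : ℂ)
            = ((((n : ℝ) - (k' : ℕ) : ℝ)) : ℂ) * ((Real.sqrt (n.choose (k' : ℕ) : ℝ) : ℝ) : ℂ) := by
          rw [← Complex.ofReal_mul, ← Complex.ofReal_mul, sq1 n (k' : ℕ) hk]
        rw [hc1, hΨdef]
        simp only []
        calc z₁ * (starRingEnd ℂ) z₂ *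
              ((Real.sqrt (((k' : ℕ) + 1 : ℝ) * ((n : ℝ) - (k' : ℕ))) : ℝ) : ℂ) *
              (((Real.sqrt (n.choose ((k' : ℕ) + 1) : ℝ) : ℝ) : ℂ) * z₁ ^ (n - ((k' : ℕ) + 1)) * z₂ ^ ((k' : ℕ) + 1))
            = (((Real.sqrt (((k' : ℕ) + 1 : ℝ) * ((n : ℝ) - (k' : ℕ))) : ℝ) : ℂ)
                * ((Real.sqrt (n.choose ((k' : ℕ) + 1) : ℝ) : ℝ) : ℂ))
              * (((starRingEnd ℂ) z₂ * z₂) * (z₁ ^ (n - ((k' : ℕ) + 1)) * z₁) * z₂ ^ (k' : ℕ)) := by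
              ring
          _ = (((((n : ℝ) - (k' : ℕ) : ℝ)) : ℂ) * ((Real.sqrt (n.choose (k' : ℕ) : ℝ) : ℝ) : ℂ))
              * (((‖z₂‖ ^ 2 : ℝ) : ℂ) * (z₁ ^ (n - (k' : ℕ))) * z₂ ^ (k' : ℕ)) := by
              rw [e2c, e3, ← e1]
          _ = ((‖z₂‖ ^ 2 : ℝ) : ℂ) * ((((n : ℝ) - (k' : ℕ) : ℝ)) : ℂ)
              * (((Real.sqrt (n.choose (k' : ℕ) : ℝ) : ℝ) : ℂ) * z₁ ^ (n - (k' : ℕ)) * z₂ ^ (k' : ℕ)) := by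
              ring
      · have hkn : (k' : ℕ) = n := by have := k'.isLt; omega
        have h0 : ((n : ℝ) - (k' : ℕ)) = 0 := by rw [hkn]; ring
        rw [hc1, h0, mul_zero, Real.sqrt_zero]
        push_cast
        ring
    have claimB : (if 0 < (k' : ℕ) then c2 else 0)
        = ((‖z₁‖ ^ 2 : ℝ) : ℂ) * (((k' : ℕ) : ℝ) : ℂ) * Ψ (k' : ℕ) := by
      by_cases hk0 : 0 < (k' : ℕ)
      · obtain ⟨j, hjk⟩ : ∃ j, (k' : ℕ) = j + 1 := ⟨(k' : ℕ) - 1, by omega⟩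
        have hjn : j < n := by have := k'.isLt; omega
        rw [if_pos hk0, hc2, hΨdef]
        simp only [hjk, Nat.add_sub_cancel]
        have e1 : z₁ ^ (n - j) = z₁ ^ (n - (j + 1)) * z₁ := by
          rw [← pow_succ]; congr 1; omega
        have e3 : (starRingEnd ℂ) z₁ * z₁ = ((‖z₁‖ ^ 2 : ℝ) : ℂ) := by
          rw [mul_comm, Complex.mul_conj, Complex.sq_norm]
        have e2c : ((Real.sqrt ((j + 1 : ℝ) * ((n : ℝ) - j)) : ℝ) : ℂ)
              * ((Real.sqrt (n.choose j : ℝ) : ℝ) : ℂ)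
            = (((j : ℝ) + 1 : ℝ) : ℂ) * ((Real.sqrt (n.choose (j + 1) : ℝ) : ℝ) : ℂ) := by
          rw [← Complex.ofReal_mul, ← Complex.ofReal_mul, sq2 n j hjn]
        calc (starRingEnd ℂ) z₁ * z₂ *
              ((Real.sqrt ((j + 1 : ℝ) * ((n : ℝ) - j)) : ℝ) : ℂ) *
              (((Real.sqrt (n.choose j : ℝ) : ℝ) : ℂ) * z₁ ^ (n - j) * z₂ ^ j)
            = (((Real.sqrt ((j + 1 : ℝ) * ((n : ℝ) - j)) : ℝ) : ℂ)
                * ((Real.sqrt (n.choose j : ℝ) : ℝ) : ℂ))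
              * (((starRingEnd ℂ) z₁ * z₁) * z₁ ^ (n - (j + 1)) * z₂ ^ (j + 1)) := by
              rw [e1]; ring
          _ = ((((j : ℝ) + 1 : ℝ)) : ℂ) * ((Real.sqrt (n.choose (j + 1) : ℝ) : ℝ) : ℂ)
              * (((‖z₁‖ ^ 2 : ℝ) : ℂ) * z₁ ^ (n - (j + 1)) * z₂ ^ (j + 1)) := by
              rw [e2c, e3]
          _ = ((‖z₁‖ ^ 2 : ℝ) : ℂ) * (((j + 1 : ℕ) : ℝ) : ℂ)
              * (((Real.sqrt (n.choose (j + 1) : ℝ) : ℝ) : ℂ) * z₁ ^ (n - (j + 1)) * z₂ ^ (j + 1)) := by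
              push_cast; ring
      · rw [if_neg hk0]
        have hk0' : (k' : ℕ) = 0 := by omega
        simp [hk0']
    rw [claimA, claimB, hΨ k', hc3]
    have hr : ‖z₂‖ ^ 2 * ((n : ℝ) - (k' : ℕ)) + ‖z₁‖ ^ 2 * ((k' : ℕ) : ℝ)
        + nz * ((n : ℝ) / 2 - ((k' : ℕ) : ℝ)) = (n : ℝ) / 2 := by
      rw [hz]; linear_combination ((n : ℝ) / 2) * h
    have hrC := congrArg (fun r : ℝ => (r : ℂ)) hr
    push_cast at hrC
    push_cast
    linear_combination Ψ (k' : ℕ) * hrC
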